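/- Let ν, F : ℕ → ℂ with |ν| ≤ 1, |F| ≤ 1, let P and Q be finite sets of positive integers such that every p ∈ P is coprime to every q ∈ Q and the map P × Q → ℕ, (p,q) ↦ pq, is injective. Then |∑_{p∈P, q∈Q} ν(pq)F(pq)| ≤ |Q|^{1/2} · (∑_{p₁,p₂∈P} |∑_{q∈Q'} F(p₁ q) conj(F(p₂ q))|)^{1/2} for any finite set Q' ⊇ Q of positive integers, where ν is multiplicative on coprime arguments. -/

import Mathlib

/-- The Cauchy–Schwarz step (2.17) of the bilinear sums method. -/
theorem cauchy_schwarz_step (ν F : ℕ → ℂ)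
    (hν : ∀ n, ‖ν n‖ ≤ 1)
    (hF : ∀ n, ‖F n‖ ≤ 1)
    (hmult : ∀ m n : ℕ, Nat.Coprime m n → ν (m * n) = ν m * ν n)
    (P Q Q' : Finset ℕ)
    (hP : ∀ p ∈ P, 0 < p) (hQ : ∀ q ∈ Q, 0 < q) (hQ' : ∀ q ∈ Q', 0 < q)
    (hcop : ∀ p ∈ P, ∀ q ∈ Q, Nat.Coprime p q)
    (hinj : ∀ p₁ ∈ P, ∀ q₁ ∈ Q, ∀ p₂ ∈ P, ∀ q₂ ∈ Q,
      p₁ * q₁ = p₂ * q₂ → p₁ = p₂ ∧ q₁ = q₂)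
    (hQQ' : Q ⊆ Q') :
    ‖∑ p ∈ P, ∑ q ∈ Q, ν (p * q) * F (p * q)‖
      ≤ Real.sqrt (Q.card : ℝ) *
        Real.sqrt (∑ p₁ ∈ P, ∑ p₂ ∈ P,
          ‖∑ q ∈ Q', F (p₁ * q) * (starRingEnd ℂ) (F (p₂ * q))‖) := by
  set g : ℕ → ℂ := fun q => ∑ p ∈ P, ν p * F (p * q) with hg
  set B : ℝ := ∑ p₁ ∈ P, ∑ p₂ ∈ P,
      ‖∑ q ∈ Q', F (p₁ * q) * (starRingEnd ℂ) (F (p₂ * q))‖ with hB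
  have h1 : (∑ p ∈ P, ∑ q ∈ Q, ν (p * q) * F (p * q))
      = ∑ q ∈ Q, ν q * g q := by
    rw [Finset.sum_comm]
    refine Finset.sum_congr rfl fun q hq => ?_
    rw [hg, Finset.mul_sum]
    refine Finset.sum_congr rfl fun p hp => ?_
    rw [hmult p q (hcop p hp q hq)]; ring
  have h2 : ‖∑ q ∈ Q, ν q * g q‖ ≤ ∑ q ∈ Q, ‖g q‖ := by
    refine (norm_sum_le _ _).trans (Finset.sum_le_sum fun q hq => ?_)
    rw [norm_mul]
    calc ‖ν q‖ * ‖g q‖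
        ≤ 1 * ‖g q‖ :=
          mul_le_mul_of_nonneg_right (hν q) (norm_nonneg _)
      _ = _ := one_mul _
  have h3 : (∑ q ∈ Q, ‖g q‖)^2 ≤ (Q.card : ℝ) * ∑ q ∈ Q, ‖g q‖ ^ 2 := by
    have := Finset.sum_mul_sq_le_sq_mul_sq Q (fun _ => (1:ℝ)) (fun q => ‖g q‖)
    simpa using this
  have h4 : ∑ q ∈ Q, ‖g q‖ ^ 2 ≤ ∑ q ∈ Q', ‖g q‖ ^ 2 :=
    Finset.sum_le_sum_of_subset_of_nonneg hQQ' (fun q _ _ => by positivity)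
  have h5 : ∑ q ∈ Q', ‖g q‖ ^ 2 ≤ B := by
    have hexp : (∑ q ∈ Q', (g q * (starRingEnd ℂ) (g q))) =
        ∑ p₁ ∈ P, ∑ p₂ ∈ P, (ν p₁ * (starRingEnd ℂ) (ν p₂)) *
          ∑ q ∈ Q', F (p₁ * q) * (starRingEnd ℂ) (F (p₂ * q)) := by
      have step : ∀ q, g q * (starRingEnd ℂ) (g q) =
          ∑ p₁ ∈ P, ∑ p₂ ∈ P, (ν p₁ * F (p₁ * q)) * (starRingEnd ℂ) (ν p₂ * F (p₂ * q)) := by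
        intro q
        rw [hg]
        simp only [map_sum]
        rw [Finset.sum_mul_sum]
      rw [Finset.sum_congr rfl fun q _ => step q, Finset.sum_comm]
      refine Finset.sum_congr rfl fun p₁ _ => ?_
      rw [Finset.sum_comm]
      refine Finset.sum_congr rfl fun p₂ _ => ?_
      rw [Finset.mul_sum]
      refine Finset.sum_congr rfl fun q _ => ?_
      rw [map_mul]; ring
    have hre : (∑ q ∈ Q', ‖g q‖ ^ 2) =
        (∑ q ∈ Q', (g q * (starRingEnd ℂ) (g q))).re := by
      rw [Complex.re_sum]
      refine Finset.sum_congr rfl fun q _ => ?_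
      rw [Complex.mul_conj, Complex.ofReal_re, Complex.sq_norm]
    rw [hre, hexp]
    calc (∑ p₁ ∈ P, ∑ p₂ ∈ P, (ν p₁ * (starRingEnd ℂ) (ν p₂)) *
          ∑ q ∈ Q', F (p₁ * q) * (starRingEnd ℂ) (F (p₂ * q))).re
        ≤ ‖∑ p₁ ∈ P, ∑ p₂ ∈ P, (ν p₁ * (starRingEnd ℂ) (ν p₂)) *
          ∑ q ∈ Q', F (p₁ * q) * (starRingEnd ℂ) (F (p₂ * q))‖ := Complex.re_le_norm _
      _ ≤ ∑ p₁ ∈ P, ∑ p₂ ∈ P, ‖(ν p₁ * (starRingEnd ℂ) (ν p₂)) *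
          ∑ q ∈ Q', F (p₁ * q) * (starRingEnd ℂ) (F (p₂ * q))‖ := by
          refine (norm_sum_le _ _).trans (Finset.sum_le_sum fun p₁ _ => ?_)
          exact norm_sum_le _ _
      _ ≤ B := by
          rw [hB]
          refine Finset.sum_le_sum fun p₁ _ => Finset.sum_le_sum fun p₂ _ => ?_
          rw [norm_mul, norm_mul]
          calc ‖ν p₁‖ * ‖(starRingEnd ℂ) (ν p₂)‖ *
                ‖∑ q ∈ Q', F (p₁ * q) * (starRingEnd ℂ) (F (p₂ * q))‖
              ≤ 1 * 1 * ‖∑ q ∈ Q', F (p₁ * q) * (starRingEnd ℂ) (F (p₂ * q))‖ := by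
                refine mul_le_mul (mul_le_mul (hν p₁) (by simpa using hν p₂)
                  (norm_nonneg _) zero_le_one) le_rfl
                  (norm_nonneg _) (by norm_num)
            _ = _ := by ring
  rw [h1]
  refine h2.trans ?_
  have hsum_nn : 0 ≤ ∑ q ∈ Q, ‖g q‖ :=
    Finset.sum_nonneg fun q _ => norm_nonneg _
  rw [← Real.sqrt_mul (Nat.cast_nonneg _)]
  have hBnn : 0 ≤ (Q.card : ℝ) * B :=
    mul_nonneg (Nat.cast_nonneg _) (Finset.sum_nonneg fun p₁ _ =>
      Finset.sum_nonneg fun p₂ _ => norm_nonneg _)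
  refine (Real.le_sqrt hsum_nn hBnn).mpr ?_
  exact h3.trans (mul_le_mul_of_nonneg_left (h4.trans h5) (Nat.cast_nonneg _))
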